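/- Let Γ be a countable structure over an at most countable relational signature and let 𝒞 be the age of Γ. Then 𝒞 has the Ramsey property if and only if Γ → (B)^A_r for all A, B ∈ 𝒞 and all r ∈ ℕ. -/

import Mathlib

open FirstOrder FirstOrder.Language CategoryTheory

universe u v w

/-- The partition arrow `C → (B)^A_r`. -/
def RamseyArrow (L : FirstOrder.Language.{u, v}) (C B A : Type w)
    [L.Structure C] [L.Structure B] [L.Structure A] (r : ℕ) : Prop :=
  ∀ χ : (A ↪[L] C) → Fin r, ∃ f : B ↪[L] C,
    ∀ e₁ e₂ : A ↪[L] B, χ (f.comp e₁) = χ (f.comp e₂)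

/-- The age of `Γ`: the class of all finite structures that embed into `Γ`. -/
def FinAge (L : FirstOrder.Language.{u, v}) (Γ : Type w) [L.Structure Γ] :
    Set (Bundled.{w} L.Structure) :=
  {A | Finite A ∧ Nonempty (A ↪[L] Γ)}

/-- A class of finite structures has the Ramsey property if for all `A, B` in the class and
all `r` there is `C` in the class with `C → (B)^A_r`. -/
def HasRamseyProperty (L : FirstOrder.Language.{u, v})
    (K : Set (Bundled.{w} L.Structure)) : Prop :=
  ∀ A ∈ K, ∀ B ∈ K, ∀ r : ℕ, ∃ C ∈ K, RamseyArrow L C B A r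

section Aux

variable (L : FirstOrder.Language.{u, v}) [L.IsRelational]
  (Γ : Type w) [L.Structure Γ]

/-- For a relational language, any subset of a structure carries an induced structure. -/
def setStructure (s : Set Γ) : L.Structure s where
  funMap := fun {n} f _ => isEmptyElim f
  RelMap := fun {n} R x => Structure.RelMap R (fun i => ((x i : s) : Γ))

attribute [local instance] setStructure

/-- The inclusion of a subset as an embedding. -/
def setInclusion (s : Set Γ) : (s : Type w) ↪[L] Γ where
  toFun := Subtype.val
  inj' := Subtype.val_injective
  map_fun' := fun {n} f _ => isEmptyElim f
  map_rel' := fun {n} R x => Iff.rfl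

/-- Corestriction of an embedding to a subset containing its range. -/
def codRes {A : Type w} [L.Structure A] (s : Set Γ) (e : A ↪[L] Γ)
    (h : ∀ x, e x ∈ s) : A ↪[L] (s : Type w) where
  toFun := fun x => ⟨e x, h x⟩
  inj' := fun a b hab => e.injective (congrArg Subtype.val hab)
  map_fun' := fun {n} f _ => isEmptyElim f
  map_rel' := fun {n} R x => e.map_rel' R x

end Aux

/-- For a countable structure `Γ` over an at most countable relational signature, the age of `Γ`
has the Ramsey property if and only if `Γ → (B)^A_r` for all `A, B` in the age and all `r`. -/
theorem stmt1 (L : FirstOrder.Language.{u, v}) [L.IsRelational]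
    [Countable (Σ n, L.Relations n)]
    (Γ : Type w) [L.Structure Γ] [Countable Γ] :
    HasRamseyProperty L (FinAge L Γ) ↔
      ∀ A ∈ FinAge L Γ, ∀ B ∈ FinAge L Γ, ∀ r : ℕ, RamseyArrow L Γ B A r := by
  classical
  letI : ∀ s : Set Γ, L.Structure s := setStructure L Γ
  constructor
  · -- easy direction
    intro h A hA B hB r χ
    obtain ⟨C, hC, hArrow⟩ := h A hA B hB r
    obtain ⟨g⟩ := hC.2
    obtain ⟨f, hf⟩ := hArrow (fun e => χ (g.comp e))
    refine ⟨g.comp f, fun e₁ e₂ => ?_⟩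
    rw [Embedding.comp_assoc, Embedding.comp_assoc]
    exact hf e₁ e₂
  · intro h A hA B hB r
    rcases Nat.eq_zero_or_pos r with hr | hr
    · -- r = 0 : take C = B
      subst hr
      refine ⟨B, hB, fun χ => ?_⟩
      by_cases hAB : Nonempty ((A : Type w) ↪[L] (B : Type w))
      · exact (χ hAB.some).elim0
      · exact ⟨Embedding.refl L B, fun e₁ e₂ => absurd ⟨e₁⟩ hAB⟩
    · by_contra hcon
      push_neg at hcon
      -- every finite subset of Γ carries a bad colouring
      have hbad : ∀ S : Finset Γ, ∃ χ : ((A : Type w) ↪[L] ((S : Set Γ) : Type w)) → Fin r,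
          ∀ f : (B : Type w) ↪[L] ((S : Set Γ) : Type w),
            ∃ e₁ e₂ : (A : Type w) ↪[L] (B : Type w),
              χ (f.comp e₁) ≠ χ (f.comp e₂) := by
        intro S
        have hmem : (⟨((S : Set Γ) : Type w), inferInstance⟩ : Bundled L.Structure) ∈
            FinAge L Γ := by
          refine ⟨by simpa using Set.Finite.to_subtype S.finite_toSet,
            ⟨setInclusion L Γ (S : Set Γ)⟩⟩
        have := hcon _ hmem
        unfold RamseyArrow at this
        push_neg at this
        exact this
      choose χS hχS using hbad
      -- extend each bad colouring to all embeddings `A ↪ Γ`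
      set χhat : Finset Γ → ((A : Type w) ↪[L] Γ) → Fin r := fun S e =>
        if he : ∀ x, e x ∈ (S : Set Γ) then χS S (codRes L Γ (S : Set Γ) e he)
        else ⟨0, hr⟩ with hχhat
      -- take a limit along an ultrafilter extending `atTop`
      obtain ⟨U, hU⟩ : ∃ U : Ultrafilter (Finset Γ), (U : Filter (Finset Γ)) ≤ Filter.atTop :=
        ⟨Ultrafilter.of Filter.atTop, Ultrafilter.of_le _⟩
      have hUx : ∀ e : (A : Type w) ↪[L] Γ, ∃ c : Fin r,
          {S | χhat S e = c} ∈ U := by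
        intro e
        obtain ⟨c, hc⟩ := Ultrafilter.eq_pure_of_finite (U.map (fun S => χhat S e))
        refine ⟨c, ?_⟩
        have : {c} ∈ U.map (fun S => χhat S e) := by
          rw [hc]; exact Filter.mem_pure.2 rfl
        exact Ultrafilter.mem_map.1 this
      choose χ hχ using hUx
      -- apply the hypothesis to the limit colouring
      obtain ⟨f, hf⟩ := h A hA B hB r χ
      -- the relevant embeddings
      haveI : Finite (A : Type w) := hA.1
      haveI : Finite (B : Type w) := hB.1
      haveI : Finite ((A : Type w) ↪[L] (B : Type w)) :=
        Finite.of_injective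
          (fun (e : (A : Type w) ↪[L] (B : Type w)) (x : (A : Type w)) => e x)
          (fun e₁ e₂ hee => Embedding.ext (fun x => congrFun hee x))
      -- a large enough finite set on which the limit agrees with a bad colouring
      have hrange : (Set.range f).Finite := Set.finite_range f
      obtain ⟨S₀, hS₀⟩ := hrange.exists_finset_coe
      have h1 : ∀ᶠ S : Finset Γ in U, S₀ ⊆ S := hU (Filter.eventually_ge_atTop S₀)
      have h2 : ∀ᶠ S : Finset Γ in U, ∀ e : (A : Type w) ↪[L] (B : Type w),
          χhat S (f.comp e) = χ (f.comp e) :=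
        Filter.eventually_all.2 (fun e => hχ (f.comp e))
      obtain ⟨S, hS1, hS2⟩ := (h1.and h2).exists
      · -- corestrict `f` to `S` and derive a contradiction
        have hfS : ∀ x, f x ∈ (S : Set Γ) := by
          intro x
          have : f x ∈ (S₀ : Set Γ) := by rw [hS₀]; exact Set.mem_range_self x
          exact hS1 this
        set f' : (B : Type w) ↪[L] ((S : Set Γ) : Type w) := codRes L Γ (S : Set Γ) f hfS
        obtain ⟨e₁, e₂, hee⟩ := hχS S f'
        apply hee
        have key : ∀ e : (A : Type w) ↪[L] (B : Type w),
            χS S (f'.comp e) = χ (f.comp e) := by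
          intro e
          have hmem : ∀ x, (f.comp e) x ∈ (S : Set Γ) := fun x => hfS (e x)
          have : χhat S (f.comp e) = χ (f.comp e) := hS2 e
          rw [hχhat] at this
          simp only [dif_pos hmem] at this
          have hcr : codRes L Γ (S : Set Γ) (f.comp e) hmem = f'.comp e := by
            apply Embedding.ext
            intro x
            rfl
          rwa [hcr] at this
        rw [key e₁, key e₂]
        exact hf e₁ e₂
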